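/- For every $\varepsilon>0$ there exists $C=C(\varepsilon)<\infty$ such that for all $\lambda\in S_{\pi-\varepsilon}$ with $|\lambda|=1$, all $\xi\in\mathbb{R}^2$ with $|\xi|>1$, all $y_3$ with $0<y_3\le1$, and all $i,j\in\{1,2\}$, one has $\Big|\big(e^{-|\xi|y_3}-e^{-\omega_\lambda(\xi)y_3}\big)\dfrac{\xi_i\xi_j}{|\xi|}\Big|\le C\,y_3\,e^{-|\xi|y_3}$, where $\omega_\lambda(\xi):=\sqrt{\lambda+|\xi|^2}$ is the principal square root. -/

import Mathlib

open MeasureTheory Set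
open scoped ENNReal NNReal
noncomputable section

/-- The sector `S_{π-ε}` : complex numbers `ρ e^{iθ}` with `ρ > 0`, `|θ| ≤ π - ε`. -/
def Sector (ε : ℝ) : Set ℂ := {z : ℂ | z ≠ 0 ∧ |z.arg| ≤ Real.pi - ε}

/-- `ω_λ(ξ) = √(λ + |ξ|²)`, principal branch of the square root. -/
def omeg (lam : ℂ) (r : ℝ) : ℂ := (lam + (r : ℂ) ^ 2) ^ ((1 : ℂ) / 2)

/-- for every `ε > 0` there is `C = C(ε) < ∞` such that for all `λ ∈ S_{π-ε}`
with `|λ| = 1`, all `ξ ∈ ℝ²` with `|ξ| > 1`, all `0 < y₃ ≤ 1` and all `i, j ∈ {1,2}`,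
`|(e^{-|ξ| y₃} - e^{-ω_λ(ξ) y₃}) ξᵢξⱼ/|ξ|| ≤ C y₃ e^{-|ξ| y₃}`. -/
theorem high_frequency_difference_bound (ε : ℝ) (hε : 0 < ε) :
    ∃ C : ℝ, 0 < C ∧
      ∀ lam ∈ Sector ε, ‖lam‖ = 1 →
        ∀ ξ : EuclideanSpace ℝ (Fin 2), 1 < ‖ξ‖ →
          ∀ y3 : ℝ, 0 < y3 → y3 ≤ 1 →
            ∀ i j : Fin 2,
              ‖(Complex.exp (-(‖ξ‖ : ℂ) * (y3 : ℂ))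
                  - Complex.exp (-(omeg lam ‖ξ‖) * (y3 : ℂ)))
                  * ((ξ i * ξ j / ‖ξ‖ : ℝ) : ℂ)‖
                ≤ C * y3 * Real.exp (-(‖ξ‖ * y3)) := by
  refine ⟨2, by norm_num, ?_⟩
  intro lam _hlam hlam1 ξ hξ y3 hy0 hy1 i j
  set r : ℝ := ‖ξ‖ with hrdef
  have hr1 : 1 < r := hξ
  have hr0 : 0 < r := lt_trans one_pos hr1
  -- `λ + r²` has positive real part, hence is nonzero
  have hre : 0 < (lam + (r:ℂ)^2).re := by
    have h1 : |lam.re| ≤ 1 := by rw [← hlam1]; exact Complex.abs_re_le_norm lam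
    have h2 : (lam + (r:ℂ)^2).re = lam.re + r^2 := by
      simp [Complex.add_re, ← Complex.ofReal_pow]
    rw [h2]
    nlinarith [abs_le.mp h1]
  have hz : lam + (r:ℂ)^2 ≠ 0 := by
    intro h; rw [h] at hre; simp at hre
  set ω := omeg lam r with hωdef
  have hsq : ω * ω = lam + (r:ℂ)^2 := by
    rw [hωdef, omeg, ← Complex.cpow_add _ _ hz]
    norm_num
  -- real part of ω is nonnegative
  have hωre : 0 ≤ ω.re := by
    rw [hωdef, omeg, Complex.cpow_def_of_ne_zero hz, Complex.exp_re]
    have him : (Complex.log (lam + (r:ℂ)^2) * ((1:ℂ)/2)).im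
        = (lam + (r:ℂ)^2).arg / 2 := by
      simp [Complex.mul_im, Complex.log_im]
      ring
    rw [him]
    have harg : |(lam + (r:ℂ)^2).arg| < Real.pi / 2 :=
      Complex.abs_arg_lt_pi_div_two_iff.2 (Or.inl hre)
    have := abs_lt.mp harg
    have hcos : 0 ≤ Real.cos ((lam + (r:ℂ)^2).arg / 2) := by
      apply Real.cos_nonneg_of_mem_Icc
      constructor <;> [linarith [Real.pi_pos]; linarith [Real.pi_pos]]
    positivity
  have hne : ω + (r:ℂ) ≠ 0 := by
    intro h
    have : (ω + (r:ℂ)).re = 0 := by rw [h]; simp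
    simp [Complex.add_re] at this
    linarith
  have habsne : r ≤ ‖ω + (r:ℂ)‖ := by
    calc r ≤ (ω + (r:ℂ)).re := by simp [Complex.add_re]; linarith
    _ ≤ ‖ω + (r:ℂ)‖ := Complex.re_le_norm _
  have hdiff : ω - (r:ℂ) = lam / (ω + (r:ℂ)) := by
    rw [eq_div_iff hne]
    linear_combination hsq
  have habs : ‖ω - (r:ℂ)‖ ≤ 1 / r := by
    rw [hdiff, norm_div, hlam1]
    exact one_div_le_one_div_of_le hr0 habsne
  -- the key identity
  have hid : Complex.exp (-(r:ℂ) * y3) - Complex.exp (-ω * y3)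
      = Complex.exp (-(r:ℂ) * y3) * (1 - Complex.exp (((r:ℂ) - ω) * y3)) := by
    rw [mul_sub, mul_one, ← Complex.exp_add]
    congr 2
    ring
  have hw : ‖((r:ℂ) - ω) * y3‖ ≤ (1/r) * y3 := by
    rw [norm_mul]
    have : ‖(r:ℂ) - ω‖ = ‖ω - (r:ℂ)‖ := by
      rw [norm_sub_rev]
    rw [this]
    have h3 : ‖(y3 : ℂ)‖ = y3 := by
      rw [Complex.norm_real, Real.norm_eq_abs, abs_of_pos hy0]
    rw [h3]
    exact mul_le_mul_of_nonneg_right habs hy0.le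
  have hw1 : ‖((r:ℂ) - ω) * y3‖ ≤ 1 := by
    refine hw.trans ?_
    have : (1:ℝ)/r ≤ 1 := by rw [div_le_one hr0]; linarith
    nlinarith
  have hexpbound : ‖1 - Complex.exp (((r:ℂ) - ω) * y3)‖ ≤ 2 * ((1/r) * y3) := by
    rw [norm_sub_rev]
    calc ‖Complex.exp (((r:ℂ) - ω) * y3) - 1‖
        ≤ 2 * ‖((r:ℂ) - ω) * y3‖ := Complex.norm_exp_sub_one_le hw1
      _ ≤ 2 * ((1/r) * y3) := by linarith
  have hexpr : ‖Complex.exp (-(r:ℂ) * y3)‖ = Real.exp (-(r * y3)) := by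
    rw [Complex.norm_exp]
    congr 1
    simp
  -- coordinate bound
  have hcoord : ∀ k : Fin 2, |ξ k| ≤ r := by
    intro k
    have hsum : ‖ξ k‖^2 ≤ ∑ l, ‖ξ l‖^2 :=
      Finset.single_le_sum (f := fun k => ‖ξ k‖^2) (fun _ _ => by positivity) (Finset.mem_univ k)
    have hr2 : r^2 = ∑ l, ‖ξ l‖^2 := by
      rw [hrdef, EuclideanSpace.norm_eq, Real.sq_sqrt (by positivity)]
    have hnk : ‖ξ k‖ = |ξ k| := Real.norm_eq_abs _
    nlinarith [abs_nonneg (ξ k), hr0, hsum, hr2]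
  have hfrac : |ξ i * ξ j / r| ≤ r := by
    rw [abs_div, abs_mul, abs_of_pos hr0]
    rw [div_le_iff₀ hr0]
    nlinarith [hcoord i, hcoord j, abs_nonneg (ξ i), abs_nonneg (ξ j)]
  -- put it together
  rw [norm_mul, hid, norm_mul, hexpr, Complex.norm_real, Real.norm_eq_abs]
  have hE : 0 < Real.exp (-(r * y3)) := Real.exp_pos _
  calc Real.exp (-(r * y3)) * ‖1 - Complex.exp (((r:ℂ) - ω) * y3)‖ * |ξ i * ξ j / r|
      ≤ Real.exp (-(r * y3)) * (2 * ((1/r) * y3)) * r := by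
        apply mul_le_mul
        · exact mul_le_mul_of_nonneg_left hexpbound hE.le
        · exact hfrac
        · exact abs_nonneg _
        · positivity
    _ = 2 * y3 * Real.exp (-(r * y3)) := by field_simp
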